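/- arXiv:2208.09328 — 5 statements merged into one kernel-verified Lean document; each statement's English description precedes it below -/
import Mathlib

section
/- Primal part of the KKT solution of the consensus optimization problem: if (ξ*, λ*) ∈ R^{Nn} × R^{Nn} satisfy −𝐇ᵀ S⁻¹ (z − 𝐇 ξ*) + (L⊗I_n) λ* = 0 and (L⊗I_n) ξ* = 0, where 𝐇 = diag{H_1,...,H_N} is block diagonal with each H_i of full column rank and S = diag{S_1,...,S_N} positive definite, then ξ* = 1_N ⊗ ξ† where ξ† = H⁻¹_cons Σ_i H_iᵀ S_i⁻¹ z_i and H_cons = Σ_i H_iᵀ S_i⁻¹ H_i. -/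
open Matrix
open scoped Kronecker BigOperators

/-- the primal part of any KKT point of the consensus optimization problem
is the consensus vector `1_N ⊗ ξ†` with `ξ† = H_cons⁻¹ Σ_i H_iᵀ S_i⁻¹ z_i`. -/
theorem kkt_primal_solution_consensus
    (N n : ℕ) (m : Fin N → ℕ)
    (L : Matrix (Fin N) (Fin N) ℝ)
    (hsymm : L.IsSymm) (hpsd : L.PosSemidef)
    (hker : ∀ v : Fin N → ℝ, L *ᵥ v = 0 ↔ ∃ c : ℝ, v = fun _ => c)
    (z : ∀ i : Fin N, Fin (m i) → ℝ)
    (H : ∀ i : Fin N, Matrix (Fin (m i)) (Fin n) ℝ)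
    (S : ∀ i : Fin N, Matrix (Fin (m i)) (Fin (m i)) ℝ)
    (hS : ∀ i, (S i).PosDef)
    (Hcons : Matrix (Fin n) (Fin n) ℝ)
    (hHcons : Hcons = ∑ i : Fin N, (H i)ᵀ * (S i)⁻¹ * (H i))
    (hHconsUnit : IsUnit Hcons)
    (ξstar lamstar : Fin N × Fin n → ℝ)
    -- the big block-diagonal output matrix 𝐇 and block-diagonal weight S
    (Hbig : Matrix (Σ i : Fin N, Fin (m i)) (Fin N × Fin n) ℝ)
    (hHbig : Hbig = fun p q => if p.1 = q.1 then H p.1 p.2 q.2 else 0)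
    (Sbig : Matrix (Σ i : Fin N, Fin (m i)) (Σ i : Fin N, Fin (m i)) ℝ)
    (hSbig : Sbig = Matrix.blockDiagonal' S)
    (zbig : (Σ i : Fin N, Fin (m i)) → ℝ)
    (hzbig : zbig = fun p => z p.1 p.2)
    -- the KKT (saddle point) equations
    (hstat : -(Hbigᵀ *ᵥ (Sbig⁻¹ *ᵥ (zbig - Hbig *ᵥ ξstar)))
        + (L ⊗ₖ (1 : Matrix (Fin n) (Fin n) ℝ)) *ᵥ lamstar = 0)
    (hfeas : (L ⊗ₖ (1 : Matrix (Fin n) (Fin n) ℝ)) *ᵥ ξstar = 0) :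
    ∀ i : Fin N, (fun k => ξstar (i, k)) =
      Hcons⁻¹ *ᵥ (∑ j : Fin N, (H j)ᵀ *ᵥ ((S j)⁻¹ *ᵥ z j)) := by
  intro i0
  -- Kronecker mulVec formula
  have hkron : ∀ (x : Fin N × Fin n → ℝ) (i : Fin N) (k : Fin n),
      ((L ⊗ₖ (1 : Matrix (Fin n) (Fin n) ℝ)) *ᵥ x) (i, k)
        = ∑ j : Fin N, L i j * x (j, k) := by
    intro x i k
    simp only [mulVec, dotProduct, Fintype.sum_prod_type, kroneckerMap_apply, one_apply,
      mul_ite, mul_one, mul_zero, ite_mul, zero_mul]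
    exact Finset.sum_congr rfl fun j _ => by simp
  -- each column of ξstar is constant
  have hconst : ∀ (i : Fin N) (k : Fin n), ξstar (i, k) = ξstar (i0, k) := by
    intro i k
    have h0 : L *ᵥ (fun j => ξstar (j, k)) = 0 := by
      funext j
      have := congrFun hfeas (j, k)
      rw [hkron] at this
      simpa [mulVec, dotProduct] using this
    obtain ⟨c, hc⟩ := (hker _).mp h0
    simp [congrFun hc i, congrFun hc i0]
  -- row sums of L are zero
  have hrow : ∀ i : Fin N, ∑ j : Fin N, L i j = 0 := by
    intro i
    have h1 : L *ᵥ (fun _ => (1 : ℝ)) = 0 := (hker _).mpr ⟨1, rfl⟩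
    have := congrFun h1 i
    simpa [mulVec, dotProduct] using this
  -- column sums of L are zero
  have hcol : ∀ j : Fin N, ∑ i : Fin N, L i j = 0 := by
    intro j
    have : ∀ i, L i j = L j i := fun i => hsymm.apply j i
    simp only [this]
    exact hrow j
  -- inverse of the block-diagonal S
  have hSinv : Sbig⁻¹ = Matrix.blockDiagonal' (fun i => (S i)⁻¹) := by
    apply Matrix.inv_eq_right_inv
    rw [hSbig, ← Matrix.blockDiagonal'_mul]
    rw [show (fun i => S i * (S i)⁻¹) = fun i => (1 : Matrix (Fin (m i)) (Fin (m i)) ℝ) from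
      funext fun i => Matrix.mul_nonsing_inv _ (isUnit_iff_ne_zero.mpr (hS i).det_pos.ne')]
    exact Matrix.blockDiagonal'_one
  -- compute the residual vector blockwise
  set r : (Σ i : Fin N, Fin (m i)) → ℝ := zbig - Hbig *ᵥ ξstar with hr
  have hrblock : ∀ (i : Fin N) (l : Fin (m i)),
      r ⟨i, l⟩ = z i l - (H i *ᵥ fun k => ξstar (i, k)) l := by
    intro i l
    simp only [hr, Pi.sub_apply, hzbig, hHbig, mulVec, dotProduct, Fintype.sum_prod_type]
    congr 1
    rw [Finset.sum_comm]
    simp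
  have hSinvr : ∀ (i : Fin N) (l : Fin (m i)),
      (Sbig⁻¹ *ᵥ r) ⟨i, l⟩ = ((S i)⁻¹ *ᵥ fun l' => r ⟨i, l'⟩) l := by
    intro i l
    rw [hSinv]
    simp only [mulVec, dotProduct]
    rw [← Finset.univ_sigma_univ, Finset.sum_sigma]
    rw [Finset.sum_eq_single i]
    · apply Finset.sum_congr rfl
      intro l' _
      rw [Matrix.blockDiagonal'_apply_eq]
    · intro j _ hj
      apply Finset.sum_eq_zero
      intro l' _
      rw [Matrix.blockDiagonal'_apply_ne _ _ _ (Ne.symm hj), zero_mul]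
    · simp
  -- stationarity blockwise
  have hstatblock : ∀ (i : Fin N) (k : Fin n),
      -((H i)ᵀ *ᵥ ((S i)⁻¹ *ᵥ fun l' => r ⟨i, l'⟩)) k
        + ∑ j : Fin N, L i j * lamstar (j, k) = 0 := by
    intro i k
    have hHT : ∀ (w : (Σ i : Fin N, Fin (m i)) → ℝ),
        (Hbigᵀ *ᵥ w) (i, k) = ((H i)ᵀ *ᵥ fun l => w ⟨i, l⟩) k := by
      intro w
      simp only [mulVec, dotProduct, transpose_apply, hHbig]
      rw [← Finset.univ_sigma_univ, Finset.sum_sigma]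
      rw [Finset.sum_eq_single i]
      · apply Finset.sum_congr rfl
        intro l _
        change (if i = i then H i l k else 0) * w ⟨i, l⟩ = H i l k * w ⟨i, l⟩
        rw [if_pos rfl]
      · intro j _ hj
        apply Finset.sum_eq_zero
        intro l _
        change (if j = i then H j l k else 0) * w ⟨j, l⟩ = 0
        rw [if_neg hj, zero_mul]
      · simp
    have := congrFun hstat (i, k)
    rw [Pi.add_apply, Pi.neg_apply, hkron, Pi.zero_apply, hHT] at this
    rw [show (fun l => (Sbig⁻¹ *ᵥ r) ⟨i, l⟩) = (S i)⁻¹ *ᵥ fun l' => r ⟨i, l'⟩ from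
      funext (hSinvr i)] at this
    exact this
  -- sum the stationarity over i : the dual part vanishes
  have hsum : ∀ k : Fin n,
      ∑ i : Fin N, ((H i)ᵀ *ᵥ ((S i)⁻¹ *ᵥ fun l' => r ⟨i, l'⟩)) k = 0 := by
    intro k
    have h1 : ∑ i : Fin N, ((∑ j : Fin N, L i j * lamstar (j, k))
        - ((H i)ᵀ *ᵥ ((S i)⁻¹ *ᵥ fun l' => r ⟨i, l'⟩)) k) = 0 := by
      apply Finset.sum_eq_zero
      intro i _
      rw [sub_eq_zero, ← neg_add_eq_zero.mp (hstatblock i k)]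
    rw [Finset.sum_sub_distrib, sub_eq_zero] at h1
    rw [← h1, Finset.sum_comm]
    apply Finset.sum_eq_zero
    intro j _
    rw [← Finset.sum_mul, hcol, zero_mul]
  -- rewrite the residual using constancy of ξstar
  set ξ : Fin n → ℝ := fun k => ξstar (i0, k) with hξ
  have hrconst : ∀ i : Fin N,
      (fun l' => r ⟨i, l'⟩) = z i - H i *ᵥ ξ := by
    intro i
    funext l'
    rw [hrblock]
    simp only [Pi.sub_apply]
    congr 1
    simp only [mulVec, dotProduct]
    exact Finset.sum_congr rfl fun k _ => by rw [hconst]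
  -- derive Hcons *ᵥ ξ = ∑ ...
  have hmain : Hcons *ᵥ ξ = ∑ j : Fin N, (H j)ᵀ *ᵥ ((S j)⁻¹ *ᵥ z j) := by
    funext k
    have h := hsum k
    have hrec : ∀ i : Fin N,
        ((H i)ᵀ *ᵥ ((S i)⁻¹ *ᵥ fun l' => r ⟨i, l'⟩)) k
          = ((H i)ᵀ *ᵥ ((S i)⁻¹ *ᵥ z i)) k - (((H i)ᵀ * (S i)⁻¹ * (H i)) *ᵥ ξ) k := by
      intro i
      rw [hrconst i, Matrix.mulVec_sub, Matrix.mulVec_sub, ← Matrix.mulVec_mulVec,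
        ← Matrix.mulVec_mulVec]
      simp
    rw [Finset.sum_congr rfl (fun i _ => hrec i)] at h
    rw [Finset.sum_sub_distrib, sub_eq_zero] at h
    have : (Hcons *ᵥ ξ) k = ∑ i : Fin N, (((H i)ᵀ * (S i)⁻¹ * (H i)) *ᵥ ξ) k := by
      rw [hHcons]
      simp only [mulVec, dotProduct, Matrix.sum_apply, Finset.sum_mul]
      rw [Finset.sum_comm]
    rw [this, ← h]
    simp
  have hdet : IsUnit Hcons.det := (Matrix.isUnit_iff_isUnit_det Hcons).mp hHconsUnit
  calc (fun k => ξstar (i0, k)) = ξ := rfl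
    _ = Hcons⁻¹ *ᵥ (Hcons *ᵥ ξ) := by
        rw [Matrix.mulVec_mulVec, Matrix.nonsing_inv_mul _ hdet, Matrix.one_mulVec]
    _ = Hcons⁻¹ *ᵥ (∑ j : Fin N, (H j)ᵀ *ᵥ ((S j)⁻¹ *ᵥ z j)) := by rw [hmain]
end

section
/- Schur stability of the consensus-error iteration matrix: let L be a connected graph Laplacian with nonzero eigenvalues σ_2 ≤ ... ≤ σ_N ≤ σ̄, let A = diag{α_1,...,α_N} with 0 < α_i < 2/σ̄². Then all eigenvalues of the symmetric matrix Λ̃ Wᵀ A W Λ̃ lie in (0, 2), hence every eigenvalue of I_{N−1} − Λ̃ Wᵀ A W Λ̃ has absolute value strictly less than 1. -/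
open Matrix

/-- eigenvalues of `Λ̃ Wᵀ A W Λ̃` lie in `(0,2)`, hence every eigenvalue of
`I − Λ̃ Wᵀ A W Λ̃` has absolute value strictly less than 1. -/
theorem consensus_error_iteration_schur_stable
    (N : ℕ) (L : Matrix (Fin N) (Fin N) ℝ)
    (hsymm : L.IsSymm) (hpsd : L.PosSemidef)
    (W : Matrix (Fin N) (Fin (N - 1)) ℝ)
    (hW : Wᵀ * W = 1)
    (σ : Fin (N - 1) → ℝ) (σbar : ℝ)
    (hσpos : ∀ j, 0 < σ j) (hσbar : ∀ j, σ j ≤ σbar)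
    (hLW : L * W = W * Matrix.diagonal σ)
    (α : Fin N → ℝ)
    (hα : ∀ i, 0 < α i ∧ α i < 2 / σbar ^ 2) :
    ∀ (μ : ℝ) (v : Fin (N - 1) → ℝ), v ≠ 0 →
      (Matrix.diagonal σ * Wᵀ * Matrix.diagonal α * W * Matrix.diagonal σ) *ᵥ v = μ • v →
        (0 < μ ∧ μ < 2) ∧ |1 - μ| < 1 := by
  intro μ v hv hev
  obtain ⟨j0, hj0⟩ : ∃ j, v j ≠ 0 := by
    by_contra h; push_neg at h; exact hv (funext h)
  have hσbarpos : 0 < σbar := lt_of_lt_of_le (hσpos j0) (hσbar j0)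
  set w : Fin (N - 1) → ℝ := (Matrix.diagonal σ) *ᵥ v with hw
  set u : Fin N → ℝ := W *ᵥ w with hu
  have hWu : Wᵀ *ᵥ u = w := by
    rw [hu, Matrix.mulVec_mulVec, hW, Matrix.one_mulVec]
  have hune : u ≠ 0 := by
    intro h
    have hw0 : w = 0 := by rw [← hWu, h, Matrix.mulVec_zero]
    have := congrFun hw0 j0
    simp only [hw, Matrix.mulVec_diagonal, Pi.zero_apply, mul_eq_zero] at this
    rcases this with h1 | h1
    · exact (hσpos j0).ne' h1
    · exact hj0 h1
  obtain ⟨i0, hi0⟩ : ∃ i, u i ≠ 0 := by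
    by_contra h; push_neg at h; exact hune (funext h)
  -- quadratic form identity
  have hdvw : ∀ z : Fin (N - 1) → ℝ, v ⬝ᵥ (Matrix.diagonal σ *ᵥ z) = w ⬝ᵥ z := by
    intro z
    rw [Matrix.dotProduct_mulVec]
    congr 1
    ext j
    simp [hw, Matrix.vecMul_diagonal, Matrix.mulVec_diagonal, mul_comm]
  have key : μ * (v ⬝ᵥ v) = ∑ i, α i * u i ^ 2 := by
    have h1 : v ⬝ᵥ ((Matrix.diagonal σ * Wᵀ * Matrix.diagonal α * W * Matrix.diagonal σ) *ᵥ v)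
        = μ * (v ⬝ᵥ v) := by
      rw [hev, dotProduct_smul, smul_eq_mul]
    rw [← h1]
    rw [show (Matrix.diagonal σ * Wᵀ * Matrix.diagonal α * W * Matrix.diagonal σ) *ᵥ v
        = Matrix.diagonal σ *ᵥ (Wᵀ *ᵥ (Matrix.diagonal α *ᵥ (W *ᵥ (Matrix.diagonal σ *ᵥ v))))
      by simp [Matrix.mulVec_mulVec, Matrix.mul_assoc]]
    rw [hdvw, Matrix.dotProduct_mulVec, Matrix.vecMul_transpose, ← hu]
    simp only [dotProduct, Matrix.mulVec_diagonal]
    exact Finset.sum_congr rfl fun i _ => by ring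
  have hS : 0 < v ⬝ᵥ v := by
    have h2 : v ⬝ᵥ v = ∑ j, v j ^ 2 := by simp [dotProduct, sq]
    rw [h2]
    exact Finset.sum_pos' (fun j _ => sq_nonneg _)
      ⟨j0, Finset.mem_univ _, by positivity⟩
  have hT : 0 < ∑ i, α i * u i ^ 2 :=
    Finset.sum_pos' (fun i _ => mul_nonneg (hα i).1.le (sq_nonneg _))
      ⟨i0, Finset.mem_univ _, mul_pos (hα i0).1 (by positivity)⟩
  have huu : u ⬝ᵥ u = w ⬝ᵥ w := by
    nth_rewrite 1 [hu]
    rw [Matrix.dotProduct_mulVec, ← Matrix.mulVec_transpose, hWu]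
  have hww : w ⬝ᵥ w ≤ σbar ^ 2 * (v ⬝ᵥ v) := by
    have h3 : w ⬝ᵥ w = ∑ j, (σ j * v j) ^ 2 := by
      simp [dotProduct, hw, Matrix.mulVec_diagonal, sq]
    have h3' : v ⬝ᵥ v = ∑ j, v j ^ 2 := by simp [dotProduct, sq]
    rw [h3, h3', Finset.mul_sum]
    apply Finset.sum_le_sum
    intro j _
    have hsq : σ j ^ 2 ≤ σbar ^ 2 :=
      pow_le_pow_left₀ (hσpos j).le (hσbar j) 2
    nlinarith [sq_nonneg (v j)]
  have hupper : ∑ i, α i * u i ^ 2 < 2 / σbar ^ 2 * (u ⬝ᵥ u) := by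
    have h4 : u ⬝ᵥ u = ∑ i, u i ^ 2 := by simp [dotProduct, sq]
    rw [h4, Finset.mul_sum]
    apply Finset.sum_lt_sum
    · intro i _
      exact mul_le_mul_of_nonneg_right (hα i).2.le (sq_nonneg _)
    · exact ⟨i0, Finset.mem_univ _,
        mul_lt_mul_of_pos_right (hα i0).2 (by positivity)⟩
  have hfinal : ∑ i, α i * u i ^ 2 < 2 * (v ⬝ᵥ v) := by
    calc ∑ i, α i * u i ^ 2 < 2 / σbar ^ 2 * (u ⬝ᵥ u) := hupper
      _ = 2 / σbar ^ 2 * (w ⬝ᵥ w) := by rw [huu]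
      _ ≤ 2 / σbar ^ 2 * (σbar ^ 2 * (v ⬝ᵥ v)) := by
          apply mul_le_mul_of_nonneg_left hww (by positivity)
      _ = 2 * (v ⬝ᵥ v) := by field_simp
  have hμpos : 0 < μ := by
    by_contra h
    push_neg at h
    nlinarith [key, hT, hS]
  have hμlt : μ < 2 := by nlinarith [key, hfinal, hS]
  exact ⟨⟨hμpos, hμlt⟩, by rw [abs_lt]; constructor <;> linarith⟩
end

section
/- Convergence of the dual-ascent consensus iteration on information rates: consider e_{l+1} = (I_{Nn} − (L⊗I_n) Ā (L⊗I_n)) e_l, where Ā = A ⊗ I_n, A = diag{α_1,...,α_N}, 0 < α_i < 2/σ̄², and the initial error satisfies (1_Nᵀ ⊗ I_n) e_0 = 0 (zero average). Then e_l → 0 as l → ∞. -/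
open Matrix Filter
open scoped Kronecker Topology

noncomputable def emb (N : ℕ) : (Fin N → ℝ) ≃ EuclideanSpace ℝ (Fin N) :=
  (WithLp.equiv 2 _).symm

lemma inner_dot {N : ℕ} (x y : Fin N → ℝ) :
    (inner (𝕜 := ℝ) (emb N x) (emb N y)) = x ⬝ᵥ y := by
  simp [emb, PiLp.inner_apply, dotProduct]
  exact Finset.sum_congr rfl fun i _ => mul_comm _ _

lemma spec_bound {N : ℕ} (L : Matrix (Fin N) (Fin N) ℝ) (hsymm : L.IsSymm)
    (hpsd : L.PosSemidef) (σbar : ℝ)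
    (hmaxeig : ∀ (μ : ℝ) (v : Fin N → ℝ), v ≠ 0 → L *ᵥ v = μ • v → μ ≤ σbar)
    (w : Fin N → ℝ) : (L *ᵥ w) ⬝ᵥ (L *ᵥ w) ≤ σbar ^ 2 * (w ⬝ᵥ w) := by
  have hL : L.IsHermitian := hpsd.1
  set b := hL.eigenvectorBasis with hb
  set lam := hL.eigenvalues with hlam
  have hev : ∀ i, L *ᵥ ⇑(b i) = lam i • ⇑(b i) := hL.mulVec_eigenvectorBasis
  have hnn : ∀ i, 0 ≤ lam i := hpsd.eigenvalues_nonneg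
  have hub : ∀ i, lam i ≤ σbar := by
    intro i
    refine hmaxeig _ _ ?_ (hev i)
    have h1 := b.orthonormal.ne_zero i
    intro hc
    apply h1
    ext j
    exact congrFun hc j
  have hkey : ∀ i, (⇑(b i)) ⬝ᵥ (L *ᵥ w) = lam i * ((⇑(b i)) ⬝ᵥ w) := by
    intro i
    rw [dotProduct_mulVec, ← mulVec_transpose, hsymm.eq, hev i]
    simp [smul_dotProduct]
  have hemb : ∀ (u : Fin N → ℝ) (i : Fin N), (inner (𝕜 := ℝ) (b i) (emb N u)) = (⇑(b i)) ⬝ᵥ u := by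
    intro u i
    rw [← inner_dot (⇑(b i)) u]
    congr 1
  have expand : ∀ u : Fin N → ℝ, u ⬝ᵥ u = ∑ i, ((⇑(b i)) ⬝ᵥ u) ^ 2 := by
    intro u
    have h0 := b.sum_inner_mul_inner (emb N u) (emb N u)
    rw [← inner_dot u u, ← h0]
    refine Finset.sum_congr rfl fun i _ => ?_
    rw [← hemb u i, sq, real_inner_comm (b i) (emb N u)]
  rw [expand, expand w, Finset.mul_sum]
  refine Finset.sum_le_sum fun i _ => ?_
  rw [hkey i, mul_pow]
  have h2 : (lam i) ^ 2 ≤ σbar ^ 2 := by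
    have := hnn i; have := hub i; nlinarith
  nlinarith [sq_nonneg ((⇑(b i)) ⬝ᵥ w)]

lemma dot_self_nonneg {N : ℕ} (v : Fin N → ℝ) : 0 ≤ v ⬝ᵥ v :=
  Finset.sum_nonneg fun i _ => mul_self_nonneg _

lemma contraction {N : ℕ} (hN : 0 < N) (L : Matrix (Fin N) (Fin N) ℝ)
    (hsymm : L.IsSymm) (hpsd : L.PosSemidef)
    (hker : ∀ v : Fin N → ℝ, L *ᵥ v = 0 ↔ ∃ c : ℝ, v = fun _ => c)
    (σbar : ℝ) (hσbar : 0 < σbar)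
    (hmaxeig : ∀ (μ : ℝ) (v : Fin N → ℝ), v ≠ 0 → L *ᵥ v = μ • v → μ ≤ σbar)
    (α : Fin N → ℝ) (hα : ∀ i, 0 < α i ∧ α i < 2 / σbar ^ 2) :
    ∃ r : ℝ, 0 ≤ r ∧ r < 1 ∧ ∀ v : Fin N → ℝ, (∑ i, v i) = 0 →
      ((1 - L * diagonal α * L) *ᵥ v) ⬝ᵥ ((1 - L * diagonal α * L) *ᵥ v) ≤ r * (v ⬝ᵥ v) := by
  haveI : Nonempty (Fin N) := Fin.pos_iff_nonempty.mp hN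
  set B : Matrix (Fin N) (Fin N) ℝ := 1 - L * diagonal α * L with hB
  set P : Matrix (Fin N) (Fin N) ℝ := L * diagonal α * L with hP
  -- max of α
  obtain ⟨i0, -, ha⟩ := Finset.exists_mem_eq_sup' Finset.univ_nonempty α
  set a : ℝ := Finset.univ.sup' Finset.univ_nonempty α with haa
  have ha_le : ∀ i, α i ≤ a := fun i => Finset.le_sup' α (Finset.mem_univ i)
  have ha_pos : 0 < a := lt_of_lt_of_le (hα i0).1 (ha_le i0)
  have hc : σbar ^ 2 * a < 2 := by
    have h2 := (hα i0).2
    have : a < 2 / σbar ^ 2 := ha ▸ h2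
    have hs2 : 0 < σbar ^ 2 := by positivity
    calc σbar ^ 2 * a < σbar ^ 2 * (2 / σbar ^ 2) := by
          exact mul_lt_mul_of_pos_left this hs2
      _ = 2 := by field_simp
  set c : ℝ := 2 - σbar ^ 2 * a with hcc
  have hc_pos : 0 < c := by simp [hcc]; linarith
  -- quadratic form
  set q : (Fin N → ℝ) → ℝ := fun v => (L *ᵥ v) ⬝ᵥ ((diagonal α) *ᵥ (L *ᵥ v)) with hq
  have hq_eq : ∀ v, q v = ∑ i, α i * (L *ᵥ v) i ^ 2 := by
    intro v
    simp only [hq, dotProduct, mulVec_diagonal]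
    exact Finset.sum_congr rfl fun i _ => by ring
  have hq_nonneg : ∀ v, 0 ≤ q v := by
    intro v
    rw [hq_eq]
    exact Finset.sum_nonneg fun i _ => mul_nonneg (le_of_lt (hα i).1) (sq_nonneg _)
  have hqP : ∀ v, v ⬝ᵥ (P *ᵥ v) = q v := by
    intro v
    rw [hP, hq]
    rw [Matrix.mul_assoc, ← mulVec_mulVec, ← mulVec_mulVec]
    rw [dotProduct_mulVec v L, ← mulVec_transpose, hsymm.eq]
  -- main quadratic bound
  have key : ∀ v : Fin N → ℝ, (B *ᵥ v) ⬝ᵥ (B *ᵥ v) ≤ v ⬝ᵥ v - c * q v := by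
    intro v
    have hBv : B *ᵥ v = v - P *ᵥ v := by
      rw [hB, sub_mulVec, one_mulVec]
    set u : Fin N → ℝ := (diagonal α) *ᵥ (L *ᵥ v) with hu
    have hPv : P *ᵥ v = L *ᵥ u := by
      rw [hP, Matrix.mul_assoc, ← mulVec_mulVec, ← mulVec_mulVec]
    have expand : (B *ᵥ v) ⬝ᵥ (B *ᵥ v)
        = v ⬝ᵥ v - 2 * (v ⬝ᵥ (P *ᵥ v)) + (P *ᵥ v) ⬝ᵥ (P *ᵥ v) := by
      rw [hBv, sub_dotProduct, dotProduct_sub, dotProduct_sub,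
        dotProduct_comm (P *ᵥ v) v]
      ring
    have h1 : (P *ᵥ v) ⬝ᵥ (P *ᵥ v) ≤ σbar ^ 2 * (u ⬝ᵥ u) := by
      rw [hPv]
      exact spec_bound L hsymm hpsd σbar hmaxeig u
    have h2 : u ⬝ᵥ u ≤ a * q v := by
      rw [hq_eq]
      simp only [hu, dotProduct, mulVec_diagonal, Finset.mul_sum]
      refine Finset.sum_le_sum fun i _ => ?_
      have h3 := (hα i).1
      have h4 := ha_le i
      nlinarith [sq_nonneg ((L *ᵥ v) i)]
    rw [expand, hqP]
    have hq0 := hq_nonneg v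
    nlinarith
  -- positivity of q on the zero-sum subspace
  have hq_pos : ∀ v : Fin N → ℝ, (∑ i, v i) = 0 → v ≠ 0 → 0 < q v := by
    intro v hsum hv
    have hLv : L *ᵥ v ≠ 0 := by
      intro hc0
      obtain ⟨cst, hcst⟩ := (hker v).mp hc0
      apply hv
      have : (N : ℝ) * cst = 0 := by
        rw [hcst] at hsum
        simpa [Finset.sum_const, Finset.card_univ] using hsum
      have hcst0 : cst = 0 := by
        rcases mul_eq_zero.mp this with h | h
        · exact absurd h (by positivity)
        · exact h
      rw [hcst, hcst0]; rfl
    obtain ⟨i, hi⟩ := Function.ne_iff.mp hLv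
    rw [hq_eq]
    refine Finset.sum_pos' (fun j _ => mul_nonneg (le_of_lt (hα j).1) (sq_nonneg _)) ⟨i, Finset.mem_univ i, ?_⟩
    have h1 := (hα i).1
    have h2 : 0 < (L *ᵥ v) i ^ 2 :=
      lt_of_le_of_ne (sq_nonneg _) (Ne.symm (pow_ne_zero 2 hi))
    exact mul_pos h1 h2
  -- compact set
  set K : Set (Fin N → ℝ) := {v | v ⬝ᵥ v = 1 ∧ ∑ i, v i = 0} with hK
  have hdotc : ∀ M : Matrix (Fin N) (Fin N) ℝ,
      Continuous fun v : Fin N → ℝ => (M *ᵥ v) ⬝ᵥ (M *ᵥ v) := by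
    intro M
    have h1 : Continuous fun v : Fin N → ℝ => M *ᵥ v :=
      LinearMap.continuous_of_finiteDimensional (Matrix.mulVecLin M)
    unfold dotProduct
    refine continuous_finset_sum _ fun i _ => ?_
    exact ((continuous_apply i).comp h1).mul ((continuous_apply i).comp h1)
  have hKclosed : IsClosed K := by
    apply IsClosed.inter
    · refine isClosed_eq ?_ continuous_const
      unfold dotProduct
      exact continuous_finset_sum _ fun i _ =>
        (continuous_apply i).mul (continuous_apply i)
    · exact isClosed_eq (continuous_finset_sum _ fun i _ => continuous_apply i)
        continuous_const
  have hKbdd : Bornology.IsBounded K := by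
    rw [Metric.isBounded_iff_subset_closedBall 0]
    refine ⟨1, fun v hv => ?_⟩
    rw [Metric.mem_closedBall, dist_zero_right]
    rw [pi_norm_le_iff_of_nonneg zero_le_one]
    intro i
    rw [Real.norm_eq_abs, abs_le]
    have h1 : v i ^ 2 ≤ 1 := by
      rw [← hv.1]
      have : v ⬝ᵥ v = ∑ j, v j ^ 2 := by
        simp [dotProduct, sq]
      rw [this]
      exact Finset.single_le_sum (fun j _ => sq_nonneg (v j)) (Finset.mem_univ i)
    constructor <;> nlinarith
  have hKcompact : IsCompact K := Metric.isCompact_of_isClosed_isBounded hKclosed hKbdd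
  have hfc : Continuous fun v : Fin N → ℝ => (B *ᵥ v) ⬝ᵥ (B *ᵥ v) := hdotc B
  by_cases hKne : K.Nonempty
  · obtain ⟨v0, hv0K, hmax⟩ := hKcompact.exists_isMaxOn hKne hfc.continuousOn
    refine ⟨(B *ᵥ v0) ⬝ᵥ (B *ᵥ v0), dot_self_nonneg _, ?_, ?_⟩
    · have hv0ne : v0 ≠ 0 := by
        intro h0
        have h1 := hv0K.1
        rw [h0] at h1
        simp [dotProduct] at h1
      have := key v0
      have hqpos := hq_pos v0 hv0K.2 hv0ne
      have : (B *ᵥ v0) ⬝ᵥ (B *ᵥ v0) ≤ 1 - c * q v0 := by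
        rw [← hv0K.1]; exact key v0
      nlinarith
    · intro v hsum
      by_cases hv0 : v = 0
      · simp [hv0, dot_self_nonneg, mulVec_zero]
      · set t : ℝ := Real.sqrt (v ⬝ᵥ v) with ht
        have hvv_pos : 0 < v ⬝ᵥ v := by
          rcases lt_or_eq_of_le (dot_self_nonneg v) with h | h
          · exact h
          · exfalso; apply hv0
            have : ∑ i, v i ^ 2 = 0 := by
              rw [show ∑ i, v i ^ 2 = v ⬝ᵥ v from by simp [dotProduct, sq], ← h]
            funext i
            have := (Finset.sum_eq_zero_iff_of_nonneg
              (fun j _ => sq_nonneg (v j))).mp this i (Finset.mem_univ i)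
            exact (pow_eq_zero_iff two_ne_zero).mp this
        have ht_pos : 0 < t := Real.sqrt_pos.mpr hvv_pos
        have ht2 : t ^ 2 = v ⬝ᵥ v := Real.sq_sqrt (le_of_lt hvv_pos)
        set w : Fin N → ℝ := t⁻¹ • v with hw
        have hwK : w ∈ K := by
          constructor
          · rw [hw, smul_dotProduct, dotProduct_smul, smul_eq_mul, smul_eq_mul, ← ht2]
            field_simp
          · rw [hw]
            simp only [Pi.smul_apply, smul_eq_mul, ← Finset.mul_sum, hsum, mul_zero]
        have hscale : B *ᵥ v = t • (B *ᵥ w) := by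
          rw [hw, mulVec_smul, smul_smul]
          rw [mul_inv_cancel₀ (ne_of_gt ht_pos), one_smul]
        rw [hscale, smul_dotProduct, dotProduct_smul, smul_eq_mul, smul_eq_mul, ← ht2]
        have := hmax (show w ∈ K from hwK)
        simp only [Set.mem_setOf_eq] at this
        nlinarith [dot_self_nonneg (B *ᵥ w), ht_pos]
  · -- K empty: all zero-sum vectors are zero
    refine ⟨1/2, by norm_num, by norm_num, ?_⟩
    intro v hsum
    by_cases hv0 : v = 0
    · simp [hv0, mulVec_zero]
    · exfalso
      apply hKne
      have hvv_pos : 0 < v ⬝ᵥ v := by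
        rcases lt_or_eq_of_le (dot_self_nonneg v) with h | h
        · exact h
        · exfalso; apply hv0
          have : ∑ i, v i ^ 2 = 0 := by
            rw [show ∑ i, v i ^ 2 = v ⬝ᵥ v from by simp [dotProduct, sq], ← h]
          funext i
          have := (Finset.sum_eq_zero_iff_of_nonneg
            (fun j _ => sq_nonneg (v j))).mp this i (Finset.mem_univ i)
          exact (pow_eq_zero_iff two_ne_zero).mp this
      set t : ℝ := Real.sqrt (v ⬝ᵥ v) with ht
      have ht_pos : 0 < t := Real.sqrt_pos.mpr hvv_pos
      have ht2 : t ^ 2 = v ⬝ᵥ v := Real.sq_sqrt (le_of_lt hvv_pos)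
      refine ⟨t⁻¹ • v, ?_, ?_⟩
      · rw [smul_dotProduct, dotProduct_smul, smul_eq_mul, smul_eq_mul, ← ht2]
        field_simp
      · simp only [Pi.smul_apply, smul_eq_mul, ← Finset.mul_sum, hsum, mul_zero]

lemma kron_mulVec {N n : ℕ} (M : Matrix (Fin N) (Fin N) ℝ) (x : Fin N × Fin n → ℝ)
    (i : Fin N) (k : Fin n) :
    ((M ⊗ₖ (1 : Matrix (Fin n) (Fin n) ℝ)) *ᵥ x) (i, k) = ∑ j, M i j * x (j, k) := by
  simp only [mulVec, dotProduct, Fintype.sum_prod_type, kroneckerMap_apply, one_apply]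
  refine Finset.sum_congr rfl fun j _ => ?_
  rw [Finset.sum_eq_single k]
  · simp
  · intro m _ hm
    simp [Ne.symm hm]
  · simp

/-- the dual-ascent consensus iteration on the zero-average subspace
converges to zero. -/
theorem dual_ascent_information_rate_convergence
    (N n : ℕ) (L : Matrix (Fin N) (Fin N) ℝ)
    (hsymm : L.IsSymm) (hpsd : L.PosSemidef)
    (hrow : L *ᵥ (fun _ => (1 : ℝ)) = 0)
    (hker : ∀ v : Fin N → ℝ, L *ᵥ v = 0 ↔ ∃ c : ℝ, v = fun _ => c)
    (σbar : ℝ) (hσbar : 0 < σbar)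
    (hmaxeig : ∀ (μ : ℝ) (v : Fin N → ℝ), v ≠ 0 → L *ᵥ v = μ • v → μ ≤ σbar)
    (α : Fin N → ℝ) (hα : ∀ i, 0 < α i ∧ α i < 2 / σbar ^ 2)
    (e : ℕ → (Fin N × Fin n → ℝ))
    (hiter : ∀ l : ℕ, e (l + 1) =
      (1 - (L ⊗ₖ (1 : Matrix (Fin n) (Fin n) ℝ))
          * ((Matrix.diagonal α) ⊗ₖ (1 : Matrix (Fin n) (Fin n) ℝ))
          * (L ⊗ₖ (1 : Matrix (Fin n) (Fin n) ℝ))) *ᵥ e l)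
    (havg : ∀ k : Fin n, ∑ i : Fin N, e 0 (i, k) = 0) :
    Tendsto e atTop (𝓝 0) := by
  rcases Nat.eq_zero_or_pos N with hN | hN
  · subst hN
    have he : e = fun _ => 0 := funext fun l => funext fun p => Fin.elim0 p.1
    rw [he]
    exact tendsto_const_nhds
  obtain ⟨r, hr0, hr1, hcontr⟩ :=
    contraction hN L hsymm hpsd hker σbar hσbar hmaxeig α hα
  set B : Matrix (Fin N) (Fin N) ℝ := 1 - L * diagonal α * L with hB
  set P : Matrix (Fin N) (Fin N) ℝ := L * diagonal α * L with hP
  -- Kronecker product collapse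
  have hmat : (L ⊗ₖ (1 : Matrix (Fin n) (Fin n) ℝ))
      * ((Matrix.diagonal α) ⊗ₖ (1 : Matrix (Fin n) (Fin n) ℝ))
      * (L ⊗ₖ (1 : Matrix (Fin n) (Fin n) ℝ)) = P ⊗ₖ (1 : Matrix (Fin n) (Fin n) ℝ) := by
    rw [← Matrix.mul_kronecker_mul, ← Matrix.mul_kronecker_mul, Matrix.one_mul,
      Matrix.one_mul, ← hP]
  -- the per-column iteration
  have hstep : ∀ (l : ℕ) (k : Fin n),
      (fun i => e (l+1) (i, k)) = B *ᵥ (fun i => e l (i, k)) := by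
    intro l k
    funext i
    have h0 := congrFun (hiter l) (i, k)
    rw [hmat] at h0
    rw [sub_mulVec, one_mulVec] at h0
    have h1 : B *ᵥ (fun i => e l (i, k)) = (fun i => e l (i, k)) - P *ᵥ (fun i => e l (i, k)) := by
      rw [hB, sub_mulVec, one_mulVec]
    rw [h1]
    rw [h0]
    simp only [Pi.sub_apply, kron_mulVec]
    simp [mulVec, dotProduct]
  -- column sums of anything in the range of L vanish
  have hLsum : ∀ u : Fin N → ℝ, ∑ i, (L *ᵥ u) i = 0 := by
    intro u
    have h0 : ∑ i, (L *ᵥ u) i = (fun _ => (1:ℝ)) ⬝ᵥ (L *ᵥ u) := by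
      simp [dotProduct]
    rw [h0, dotProduct_mulVec, ← mulVec_transpose, hsymm.eq, hrow]
    simp [dotProduct]
  -- zero column sums are preserved
  have hsum0 : ∀ (l : ℕ) (k : Fin n), ∑ i, e l (i, k) = 0 := by
    intro l
    induction l with
    | zero => exact havg
    | succ l ih =>
      intro k
      have h0 : ∀ i, e (l+1) (i,k) = (B *ᵥ (fun i => e l (i, k))) i := by
        intro i
        exact congrFun (hstep l k) i
      calc ∑ i, e (l+1) (i, k) = ∑ i, (B *ᵥ (fun i => e l (i, k))) i :=
            Finset.sum_congr rfl fun i _ => h0 i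
        _ = 0 := by
            have h1 : B *ᵥ (fun i => e l (i, k))
                = (fun i => e l (i, k)) - L *ᵥ ((diagonal α) *ᵥ (L *ᵥ (fun i => e l (i, k)))) := by
              rw [hB, sub_mulVec, one_mulVec, hP]
              rw [Matrix.mul_assoc, ← mulVec_mulVec, ← mulVec_mulVec]
            rw [h1]
            simp only [Pi.sub_apply, Finset.sum_sub_distrib]
            rw [ih k, hLsum]
            ring
  -- geometric decay of column energies
  have hdecay : ∀ (l : ℕ) (k : Fin n),
      (fun i => e l (i, k)) ⬝ᵥ (fun i => e l (i, k))
        ≤ r ^ l * ((fun i => e 0 (i, k)) ⬝ᵥ (fun i => e 0 (i, k))) := by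
    intro l
    induction l with
    | zero => intro k; simp
    | succ l ih =>
      intro k
      rw [hstep l k]
      calc (B *ᵥ fun i => e l (i, k)) ⬝ᵥ (B *ᵥ fun i => e l (i, k))
          ≤ r * ((fun i => e l (i, k)) ⬝ᵥ (fun i => e l (i, k))) := hcontr _ (hsum0 l k)
        _ ≤ r * (r ^ l * ((fun i => e 0 (i, k)) ⬝ᵥ (fun i => e 0 (i, k)))) :=
            mul_le_mul_of_nonneg_left (ih k) hr0
        _ = r ^ (l+1) * ((fun i => e 0 (i, k)) ⬝ᵥ (fun i => e 0 (i, k))) := by ring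
  -- conclude componentwise
  rw [tendsto_pi_nhds]
  rintro ⟨i, k⟩
  set C : ℝ := (fun i => e 0 (i, k)) ⬝ᵥ (fun i => e 0 (i, k)) with hC
  have hcomp : ∀ l, (e l (i, k)) ^ 2 ≤ r ^ l * C := by
    intro l
    refine le_trans ?_ (hdecay l k)
    have : (fun j => e l (j, k)) ⬝ᵥ (fun j => e l (j, k)) = ∑ j, (e l (j, k)) ^ 2 := by
      simp [dotProduct, sq]
    rw [this]
    exact Finset.single_le_sum (fun j _ => sq_nonneg (e l (j, k))) (Finset.mem_univ i)
  have hgeo : Tendsto (fun l : ℕ => r ^ l * C) atTop (𝓝 0) := by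
    simpa using (tendsto_pow_atTop_nhds_zero_of_lt_one hr0 hr1).mul_const C
  have hsq : Tendsto (fun l => (e l (i, k)) ^ 2) atTop (𝓝 0) :=
    squeeze_zero (fun l => sq_nonneg _) hcomp hgeo
  have habs : Tendsto (fun l => |e l (i, k)|) atTop (𝓝 0) := by
    have h0 := (Real.continuous_sqrt.tendsto 0).comp hsq
    simpa [Function.comp_def, Real.sqrt_sq_eq_abs, Real.sqrt_zero] using h0
  have := (tendsto_zero_iff_abs_tendsto_zero (fun l => e l (i, k))).mpr habs
  simpa using this
end

section
/- Monotone upper bound propagation for the Riccati-type recursion: suppose P̄ is symmetric positive definite satisfying P̄ = F(P̄⁻¹ + (1−κ)Θ†)⁻¹Fᵀ + q̄ I with q̄ I ≥ Q. If P (symmetric positive definite) satisfies P ≤ P̄ and Θ is symmetric with Θ ≥ (1−κ)Θ†, then F(P⁻¹ + Θ)⁻¹Fᵀ + Q ≤ P̄. -/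
open Matrix

lemma riccati_aux_symm_dot {n : ℕ} {A : Matrix (Fin n) (Fin n) ℝ}
    (hA : Aᵀ = A) (v w : Fin n → ℝ) : v ⬝ᵥ A *ᵥ w = (A *ᵥ v) ⬝ᵥ w := by
  rw [dotProduct_mulVec, ← mulVec_transpose, hA]

lemma riccati_aux_inv_antitone {n : ℕ} {A B : Matrix (Fin n) (Fin n) ℝ}
    (hA : A.PosDef) (hB : B.PosDef) (hAB : (B - A).PosSemidef) :
    (A⁻¹ - B⁻¹).PosSemidef := by
  have hAi := hA.inv
  have hBi := hB.inv
  have hAsymm : Aᵀ = A := by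
    have := hA.isHermitian; rwa [IsHermitian, conjTranspose_eq_transpose_of_trivial] at this
  have hAisymm : (A⁻¹)ᵀ = A⁻¹ := by
    have := hAi.isHermitian; rwa [IsHermitian, conjTranspose_eq_transpose_of_trivial] at this
  refine PosSemidef.of_dotProduct_mulVec_nonneg (hAi.isHermitian.sub hBi.isHermitian) fun x => ?_
  set u : Fin n → ℝ := B⁻¹ *ᵥ x with hu
  have hdetA : IsUnit A.det := isUnit_iff_ne_zero.mpr hA.det_pos.ne'
  have hdetB : IsUnit B.det := isUnit_iff_ne_zero.mpr hB.det_pos.ne'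
  have hBu : B *ᵥ u = x := by
    rw [hu, mulVec_mulVec, mul_nonsing_inv _ hdetB, one_mulVec]
  have hAu : A⁻¹ *ᵥ (A *ᵥ u) = u := by
    rw [mulVec_mulVec, nonsing_inv_mul _ hdetA, one_mulVec]
  set v : Fin n → ℝ := x - A *ᵥ u with hv
  have h1 : 0 ≤ v ⬝ᵥ (A⁻¹ *ᵥ v) := by simpa using hAi.posSemidef.dotProduct_mulVec_nonneg v
  have h2 : 0 ≤ u ⬝ᵥ ((B - A) *ᵥ u) := by simpa using hAB.dotProduct_mulVec_nonneg u
  -- expand h1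
  have e1 : v ⬝ᵥ (A⁻¹ *ᵥ v)
      = x ⬝ᵥ (A⁻¹ *ᵥ x) - x ⬝ᵥ u - u ⬝ᵥ x + u ⬝ᵥ (A *ᵥ u) := by
    have hc : (A *ᵥ u) ⬝ᵥ (A⁻¹ *ᵥ x) = u ⬝ᵥ x := by
      rw [← riccati_aux_symm_dot hAsymm, mulVec_mulVec, mul_nonsing_inv _ hdetA, one_mulVec]
    rw [hv, mulVec_sub, sub_dotProduct, dotProduct_sub, dotProduct_sub, hAu, hc,
      ← riccati_aux_symm_dot hAsymm u u]
    ring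
  have e2 : u ⬝ᵥ ((B - A) *ᵥ u) = u ⬝ᵥ x - u ⬝ᵥ (A *ᵥ u) := by
    rw [sub_mulVec, dotProduct_sub, hBu]
  have e3 : x ⬝ᵥ u = u ⬝ᵥ x := dotProduct_comm _ _
  have goal_eq : x ⬝ᵥ ((A⁻¹ - B⁻¹) *ᵥ x)
      = v ⬝ᵥ (A⁻¹ *ᵥ v) + u ⬝ᵥ ((B - A) *ᵥ u) := by
    rw [sub_mulVec, dotProduct_sub, e1, e2, e3]
    ring
  have : 0 ≤ x ⬝ᵥ ((A⁻¹ - B⁻¹) *ᵥ x) := goal_eq ▸ add_nonneg h1 h2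
  simpa using this

/-- a fixed point `P̄` of the Riccati-type map with floor information
rate `(1−κ)Θ†` and inflated noise `q̄ I ≥ Q` propagates as an upper bound. -/
theorem riccati_upper_bound_propagation
    (n : ℕ) (F Q Θdag Pbar P Θ : Matrix (Fin n) (Fin n) ℝ)
    (κ qbar : ℝ) (hκ : 0 < κ ∧ κ < 1) (hqbar : 0 < qbar)
    (hQ : Q.PosDef) (hΘdag : Θdag.PosSemidef)
    (hPbar : Pbar.PosDef)
    (hfix : Pbar = F * (Pbar⁻¹ + ((1 : ℝ) - κ) • Θdag)⁻¹ * Fᵀ + qbar • (1 : Matrix (Fin n) (Fin n) ℝ))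
    (hqQ : (qbar • (1 : Matrix (Fin n) (Fin n) ℝ) - Q).PosSemidef)
    (hP : P.PosDef) (hPle : (Pbar - P).PosSemidef)
    (hΘsymm : Θ.IsSymm)
    (hΘge : (Θ - ((1 : ℝ) - κ) • Θdag).PosSemidef) :
    (Pbar - (F * (P⁻¹ + Θ)⁻¹ * Fᵀ + Q)).PosSemidef := by
  have hκnn : (0:ℝ) ≤ 1 - κ := by linarith [hκ.2]
  have hκΘ : (((1 : ℝ) - κ) • Θdag).PosSemidef := by
    refine PosSemidef.of_dotProduct_mulVec_nonneg ?_ fun x => ?_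
    · show _ = _
      rw [conjTranspose_smul, star_trivial, hΘdag.isHermitian.eq]
    · rw [smul_mulVec, dotProduct_smul]
      exact mul_nonneg hκnn (by simpa using hΘdag.dotProduct_mulVec_nonneg x)
  have hΘ : Θ.PosSemidef := by
    have := hΘge.add hκΘ
    simpa using this
  have hA : (P⁻¹ + Θ).PosDef := hP.inv.add_posSemidef hΘ
  have hB : (Pbar⁻¹ + ((1 : ℝ) - κ) • Θdag).PosDef := hPbar.inv.add_posSemidef hκΘ
  -- P⁻¹ - Pbar⁻¹ psd
  have hinv : (P⁻¹ - Pbar⁻¹).PosSemidef := riccati_aux_inv_antitone hP hPbar hPle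
  -- A - B psd
  have hABd : ((P⁻¹ + Θ) - (Pbar⁻¹ + ((1 : ℝ) - κ) • Θdag)).PosSemidef := by
    have := hinv.add hΘge
    convert this using 1
    abel
  have hkey : ((Pbar⁻¹ + ((1 : ℝ) - κ) • Θdag)⁻¹ - (P⁻¹ + Θ)⁻¹).PosSemidef :=
    riccati_aux_inv_antitone hB hA hABd
  have hconj : (F * ((Pbar⁻¹ + ((1 : ℝ) - κ) • Θdag)⁻¹ - (P⁻¹ + Θ)⁻¹) * Fᵀ).PosSemidef := by
    have := hkey.mul_mul_conjTranspose_same F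
    rwa [conjTranspose_eq_transpose_of_trivial] at this
  have hsum := hconj.add hqQ
  have heq : Pbar - (F * (P⁻¹ + Θ)⁻¹ * Fᵀ + Q)
      = F * ((Pbar⁻¹ + ((1 : ℝ) - κ) • Θdag)⁻¹ - (P⁻¹ + Θ)⁻¹) * Fᵀ
        + (qbar • (1 : Matrix (Fin n) (Fin n) ℝ) - Q) := by
    conv_lhs => rw [hfix]
    noncomm_ring
  rw [heq]
  exact hsum
end

section
/- Perturbation bound for the covariance update: if 0 < p̲ I ≤ P ≤ p̄ I, Θ₁, Θ₂ are symmetric PSD, and ‖F‖ ≤ f̄, then ‖F(P⁻¹+Θ₁)⁻¹Fᵀ − F(P⁻¹+Θ₂)⁻¹Fᵀ‖ ≤ f̄² p̄² ‖Θ₂ − Θ₁‖ (operator norm). -/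
open Matrix
open scoped Matrix.Norms.L2Operator

lemma aux_norm_le_of_psd {n : ℕ} {M : Matrix (Fin n) (Fin n) ℝ} {c : ℝ}
    (hM : M.PosSemidef) (hc : 0 ≤ c)
    (hle : (c • (1 : Matrix (Fin n) (Fin n) ℝ) - M).PosSemidef) :
    ‖M‖ ≤ c := by
  rw [Matrix.cstar_norm_def]
  apply ContinuousLinearMap.opNorm_le_bound _ hc
  intro x
  set x' : Fin n → ℝ := WithLp.equiv 2 (Fin n → ℝ) x with hx'
  have hMt : Mᵀ = M := hM.isHermitian
  have hS : ∃ S : Matrix (Fin n) (Fin n) ℝ, S.PosSemidef ∧ S * S = M := by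
    open scoped MatrixOrder in
    exact ⟨CFC.sqrt M, (CFC.sqrt_nonneg M).posSemidef, CFC.sqrt_mul_sqrt_self M hM.nonneg⟩
  have hcM : (c • M - M * M).PosSemidef := by
    obtain ⟨S, hPS, hSS⟩ : ∃ S : Matrix (Fin n) (Fin n) ℝ, S.PosSemidef ∧ S * S = M :=
      hS
    have heq : c • M - M * M = S * (c • (1 : Matrix (Fin n) (Fin n) ℝ) - M) * Sᴴ := by
      rw [hPS.isHermitian, Matrix.mul_sub, Matrix.sub_mul, Matrix.mul_smul, Matrix.smul_mul,
        mul_one, ← hSS]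
      simp only [mul_assoc]
    rw [heq]
    exact hle.mul_mul_conjTranspose_same _
  have e1 : x' ⬝ᵥ ((M * M) *ᵥ x') ≤ c * (x' ⬝ᵥ (M *ᵥ x')) := by
    have h := hcM.dotProduct_mulVec_nonneg x'
    simp only [Matrix.sub_mulVec, Matrix.smul_mulVec, dotProduct_sub, dotProduct_smul,
      star_trivial, smul_eq_mul] at h
    linarith
  have e2 : x' ⬝ᵥ (M *ᵥ x') ≤ c * (x' ⬝ᵥ x') := by
    have h := hle.dotProduct_mulVec_nonneg x'
    simp only [Matrix.sub_mulVec, Matrix.smul_mulVec, dotProduct_sub, dotProduct_smul,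
      star_trivial, smul_eq_mul, Matrix.one_mulVec] at h
    linarith
  have hnx : ‖x‖ ^ 2 = x' ⬝ᵥ x' := by
    rw [EuclideanSpace.norm_eq, Real.sq_sqrt (by positivity)]
    simp [dotProduct, Real.norm_eq_abs, sq_abs, pow_two, hx']
  have hTx : (WithLp.equiv 2 (Fin n → ℝ)) (toEuclideanCLM (n := Fin n) (𝕜 := ℝ) M x) = M *ᵥ x' := by
    exact Matrix.ofLp_toEuclideanCLM M x
  have hnTx : ‖toEuclideanCLM (n := Fin n) (𝕜 := ℝ) M x‖ ^ 2 = x' ⬝ᵥ ((M * M) *ᵥ x') := by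
    rw [EuclideanSpace.norm_eq, Real.sq_sqrt (by positivity)]
    have : ∀ i, (toEuclideanCLM (n := Fin n) (𝕜 := ℝ) M x) i = (M *ᵥ x') i := fun i =>
      congrFun hTx i
    simp only [Real.norm_eq_abs, sq_abs, this]
    rw [← Matrix.mulVec_mulVec]
    have : (M *ᵥ x') ⬝ᵥ (M *ᵥ x') = x' ⬝ᵥ (M *ᵥ (M *ᵥ x')) := by
      rw [dotProduct_mulVec x', ← Matrix.mulVec_transpose, hMt, dotProduct_comm]
    rw [← this]
    simp [dotProduct, pow_two]
  have key : ‖toEuclideanCLM (n := Fin n) (𝕜 := ℝ) M x‖ ^ 2 ≤ (c * ‖x‖) ^ 2 := by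
    rw [hnTx, mul_pow, hnx]
    calc x' ⬝ᵥ ((M * M) *ᵥ x') ≤ c * (x' ⬝ᵥ (M *ᵥ x')) := e1
      _ ≤ c * (c * (x' ⬝ᵥ x')) := by
          exact mul_le_mul_of_nonneg_left e2 hc
      _ = c ^ 2 * (x' ⬝ᵥ x') := by ring
  exact (pow_le_pow_iff_left₀ (norm_nonneg _) (by positivity) two_ne_zero).mp key

lemma aux_inv_bound {n : ℕ} (P Θ : Matrix (Fin n) (Fin n) ℝ) (pmax : ℝ) (hpmax : 0 ≤ pmax)
    (hP : P.PosDef) (hΘ : Θ.PosSemidef)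
    (hPhigh : (pmax • (1 : Matrix (Fin n) (Fin n) ℝ) - P).PosSemidef) :
    ‖(P⁻¹ + Θ)⁻¹‖ ≤ pmax := by
  have hA : (P⁻¹ + Θ).PosDef := hP.inv.add_posSemidef hΘ
  have hAi : (P⁻¹ + Θ)⁻¹.PosDef := hA.inv
  haveI : Invertible P := P.invertibleOfIsUnitDet (isUnit_iff_ne_zero.mpr hP.det_pos.ne')
  haveI : Invertible (P⁻¹ + Θ) := (P⁻¹ + Θ).invertibleOfIsUnitDet
    (isUnit_iff_ne_zero.mpr hA.det_pos.ne')
  set A := P⁻¹ + Θ with hAdef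
  have hAPA : A * P * A = A + (Θ + Θ * P * Θ) := by
    have h1 : A * P = 1 + Θ * P := by
      rw [hAdef, Matrix.add_mul, Matrix.nonsing_inv_mul P
        (isUnit_iff_ne_zero.mpr hP.det_pos.ne')]
    rw [h1, Matrix.add_mul, Matrix.mul_add, Matrix.mul_add, one_mul, one_mul,
      mul_assoc Θ P P⁻¹, Matrix.mul_nonsing_inv P (isUnit_iff_ne_zero.mpr hP.det_pos.ne'),
      mul_one, hAdef]
  have hX : (Θ + Θ * P * Θ).PosSemidef := by
    have := hP.posSemidef.mul_mul_conjTranspose_same Θ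
    rw [hΘ.isHermitian.eq] at this
    exact hΘ.add this
  have heq : P - A⁻¹ = A⁻¹ * (Θ + Θ * P * Θ) * (A⁻¹)ᴴ := by
    rw [hAi.isHermitian.eq]
    have h2 : Θ + Θ * P * Θ = A * P * A - A := by rw [hAPA]; abel
    rw [h2]
    simp only [Matrix.mul_sub, Matrix.sub_mul, mul_assoc,
      Matrix.mul_inv_cancel_left_of_invertible, Matrix.inv_mul_cancel_left_of_invertible,
      Matrix.mul_inv_cancel_right_of_invertible, Matrix.inv_mul_cancel_right_of_invertible,
      Matrix.mul_inv_of_invertible, Matrix.inv_mul_of_invertible, mul_one, one_mul]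
  have hstep : (pmax • (1 : Matrix (Fin n) (Fin n) ℝ) - A⁻¹).PosSemidef := by
    have h3 : pmax • (1 : Matrix (Fin n) (Fin n) ℝ) - A⁻¹
        = (pmax • (1 : Matrix (Fin n) (Fin n) ℝ) - P) + (P - A⁻¹) := by abel
    rw [h3]
    exact hPhigh.add (heq ▸ ((hX.mul_mul_conjTranspose_same (A⁻¹))))
  exact aux_norm_le_of_psd hAi.posSemidef hpmax hstep


/-- perturbation bound for the covariance update, in the L2 operator norm. -/
theorem covariance_update_perturbation_bound
    (n : ℕ) (P Θ₁ Θ₂ F : Matrix (Fin n) (Fin n) ℝ)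
    (pmin pmax fbar : ℝ) (hpmin : 0 < pmin) (hple : pmin ≤ pmax)
    (hPsymm : P.IsSymm)
    (hPlow : (P - pmin • (1 : Matrix (Fin n) (Fin n) ℝ)).PosSemidef)
    (hPhigh : (pmax • (1 : Matrix (Fin n) (Fin n) ℝ) - P).PosSemidef)
    (hΘ₁ : Θ₁.PosSemidef) (hΘ₂ : Θ₂.PosSemidef)
    (hF : ‖F‖ ≤ fbar) :
    ‖F * (P⁻¹ + Θ₁)⁻¹ * Fᵀ - F * (P⁻¹ + Θ₂)⁻¹ * Fᵀ‖ ≤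
      fbar ^ 2 * pmax ^ 2 * ‖Θ₂ - Θ₁‖ := by
  have hpmax : (0:ℝ) ≤ pmax := le_trans hpmin.le hple
  have hfbar : (0:ℝ) ≤ fbar := le_trans (norm_nonneg F) hF
  have hPpos : P.PosDef := by
    have h2 : (pmin • (1 : Matrix (Fin n) (Fin n) ℝ)).PosDef := by
      rw [Matrix.smul_one_eq_diagonal]
      exact Matrix.PosDef.diagonal (fun _ => hpmin)
    have h1 : P = (P - pmin • (1 : Matrix (Fin n) (Fin n) ℝ)) + pmin • 1 := by abel
    rw [h1]
    exact Matrix.PosDef.posSemidef_add hPlow h2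
  have n1 : ‖(P⁻¹ + Θ₁)⁻¹‖ ≤ pmax := aux_inv_bound P Θ₁ pmax hpmax hPpos hΘ₁ hPhigh
  have n2 : ‖(P⁻¹ + Θ₂)⁻¹‖ ≤ pmax := aux_inv_bound P Θ₂ pmax hpmax hPpos hΘ₂ hPhigh
  haveI : Invertible (P⁻¹ + Θ₁) := (P⁻¹ + Θ₁).invertibleOfIsUnitDet
    (isUnit_iff_ne_zero.mpr (hPpos.inv.add_posSemidef hΘ₁).det_pos.ne')
  haveI : Invertible (P⁻¹ + Θ₂) := (P⁻¹ + Θ₂).invertibleOfIsUnitDet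
    (isUnit_iff_ne_zero.mpr (hPpos.inv.add_posSemidef hΘ₂).det_pos.ne')
  set A := P⁻¹ + Θ₁
  set B := P⁻¹ + Θ₂
  have hres : A⁻¹ - B⁻¹ = A⁻¹ * (Θ₂ - Θ₁) * B⁻¹ := by
    have h : Θ₂ - Θ₁ = B - A := by simp only [A, B]; abel
    rw [h]
    simp only [Matrix.mul_sub, Matrix.sub_mul, mul_assoc,
      Matrix.mul_inv_cancel_left_of_invertible, Matrix.inv_mul_cancel_left_of_invertible,
      Matrix.mul_inv_cancel_right_of_invertible, Matrix.inv_mul_cancel_right_of_invertible,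
      Matrix.mul_inv_of_invertible, Matrix.inv_mul_of_invertible, mul_one, one_mul]
  have hdiff : F * A⁻¹ * Fᵀ - F * B⁻¹ * Fᵀ = F * (A⁻¹ * (Θ₂ - Θ₁) * B⁻¹) * Fᵀ := by
    rw [← hres]
    simp only [Matrix.mul_sub, Matrix.sub_mul]
  rw [hdiff]
  have hFt : ‖Fᵀ‖ ≤ fbar := by
    rw [← Matrix.conjTranspose_eq_transpose_of_trivial, Matrix.l2_opNorm_conjTranspose]
    exact hF
  have hmid : ‖A⁻¹ * (Θ₂ - Θ₁) * B⁻¹‖ ≤ pmax * ‖Θ₂ - Θ₁‖ * pmax := by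
    calc ‖A⁻¹ * (Θ₂ - Θ₁) * B⁻¹‖ ≤ ‖A⁻¹ * (Θ₂ - Θ₁)‖ * ‖B⁻¹‖ := Matrix.l2_opNorm_mul _ _
      _ ≤ (‖A⁻¹‖ * ‖Θ₂ - Θ₁‖) * ‖B⁻¹‖ :=
          mul_le_mul_of_nonneg_right (Matrix.l2_opNorm_mul _ _) (norm_nonneg _)
      _ ≤ (pmax * ‖Θ₂ - Θ₁‖) * pmax := by gcongr
  calc ‖F * (A⁻¹ * (Θ₂ - Θ₁) * B⁻¹) * Fᵀ‖
      ≤ ‖F * (A⁻¹ * (Θ₂ - Θ₁) * B⁻¹)‖ * ‖Fᵀ‖ := Matrix.l2_opNorm_mul _ _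
    _ ≤ (‖F‖ * ‖A⁻¹ * (Θ₂ - Θ₁) * B⁻¹‖) * ‖Fᵀ‖ :=
        mul_le_mul_of_nonneg_right (Matrix.l2_opNorm_mul _ _) (norm_nonneg _)
    _ ≤ (fbar * (pmax * ‖Θ₂ - Θ₁‖ * pmax)) * fbar := by gcongr
    _ = fbar ^ 2 * pmax ^ 2 * ‖Θ₂ - Θ₁‖ := by ring
end
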